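/- Uniform bound for solutions of Y' = AY on a thin annulus: let ρ > 1 and c, c' > 0. There exists a constant K, depending only on c, c', ρ (and the matrix size d), such that the following holds for every t ∈ (0,1): if A is a matrix-valued function, continuous on {ρ⁻¹t ≤ |z| ≤ ρ} and holomorphic on its interior, with line integral of ‖A‖ over |z| = ρ at most c and over |z| = ρ⁻¹t at most c·t, and if γ : [0,1] → {w ∈ ℂ : t ≤ |w| ≤ 1} is a C¹ path with γ(0) = 1 and length at most 1 + c', then the solution Y : [0,1] → Matrix (Fin d) (Fin d) ℂ of Y'(s) = A(γ(s)) γ'(s) Y(s) with Y(0) = 1 satisfies ‖Y(s)‖ ≤ K for all s ∈ [0,1]. -/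

import Mathlib

open Set Metric intervalIntegral Filter Function

/-- Norm bound for a circle integral of `(w - z)⁻¹ • A w` in terms of the integral of
`‖A‖` over the circle, when the distance from `z` to the circle is at least `δ`. -/
lemma norm_ci_le {E : Type*} [NormedAddCommGroup E] [NormedSpace ℂ E]
    (A : ℂ → E) {R δ : ℝ} (hR : 0 < R) (hδ : 0 < δ) (z : ℂ)
    (hA : ContinuousOn A (sphere (0:ℂ) R))
    (hdist : ∀ w ∈ sphere (0:ℂ) R, δ ≤ ‖w - z‖) :
    ‖∮ w in C(0, R), (w - z)⁻¹ • A w‖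
      ≤ δ⁻¹ * ∫ θ in (0:ℝ)..(2 * Real.pi), ‖A (circleMap 0 R θ)‖ * R := by
  have hne : ∀ θ : ℝ, circleMap 0 R θ - z ≠ 0 := by
    intro θ h
    have h1 := hdist _ (circleMap_mem_sphere (0:ℂ) hR.le θ)
    rw [h] at h1; simp at h1; linarith
  have hcm : ∀ θ : ℝ, ‖circleMap 0 R θ‖ = R := by
    intro θ; simpa [abs_of_pos hR] using norm_circleMap_zero R θ
  have hAc : ContinuousOn (fun θ : ℝ => A (circleMap 0 R θ)) (Icc 0 (2 * Real.pi)) :=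
    hA.comp (continuous_circleMap 0 R).continuousOn
      (fun θ _ => circleMap_mem_sphere (0:ℂ) hR.le θ)
  have hInt2 : IntervalIntegrable (fun θ : ℝ => δ⁻¹ * (‖A (circleMap 0 R θ)‖ * R))
      MeasureTheory.volume 0 (2 * Real.pi) := by
    apply ContinuousOn.intervalIntegrable
    rw [uIcc_of_le Real.two_pi_pos.le]
    exact continuousOn_const.mul (hAc.norm.mul continuousOn_const)
  have hInt1 : IntervalIntegrable
      (fun θ : ℝ => ‖deriv (circleMap 0 R) θ •
        ((circleMap 0 R θ - z)⁻¹ • A (circleMap 0 R θ))‖) MeasureTheory.volume 0 (2 * Real.pi) := by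
    apply ContinuousOn.intervalIntegrable
    rw [uIcc_of_le Real.two_pi_pos.le]
    apply ContinuousOn.norm
    simp only [deriv_circleMap]
    exact (((continuous_circleMap 0 R).mul continuous_const).continuousOn).smul
      ((((continuous_circleMap 0 R).continuousOn.sub continuousOn_const).inv₀
        (fun θ _ => hne θ)).smul hAc)
  calc ‖∮ w in C(0, R), (w - z)⁻¹ • A w‖
      ≤ ∫ θ in (0:ℝ)..(2 * Real.pi), ‖deriv (circleMap 0 R) θ •
          ((circleMap 0 R θ - z)⁻¹ • A (circleMap 0 R θ))‖ :=
        intervalIntegral.norm_integral_le_integral_norm Real.two_pi_pos.le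
    _ ≤ ∫ θ in (0:ℝ)..(2 * Real.pi), δ⁻¹ * (‖A (circleMap 0 R θ)‖ * R) := by
        apply intervalIntegral.integral_mono_on Real.two_pi_pos.le hInt1 hInt2
        intro θ _
        rw [norm_smul, norm_smul, deriv_circleMap]
        have h1 : ‖circleMap 0 R θ * Complex.I‖ = R := by
          simp [hcm θ]
        have h2 : ‖(circleMap 0 R θ - z)⁻¹‖ ≤ δ⁻¹ := by
          rw [norm_inv]
          apply inv_anti₀ hδ
          simpa using hdist _ (circleMap_mem_sphere (0:ℂ) hR.le θ)
        rw [h1]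
        have h3 : (0:ℝ) ≤ ‖A (circleMap 0 R θ)‖ := norm_nonneg _
        have h4 : (0:ℝ) ≤ ‖(circleMap 0 R θ - z)⁻¹‖ := norm_nonneg _
        nlinarith [mul_le_mul_of_nonneg_right (mul_le_mul_of_nonneg_right h2 h3) hR.le]
    _ = δ⁻¹ * ∫ θ in (0:ℝ)..(2 * Real.pi), ‖A (circleMap 0 R θ)‖ * R :=
        intervalIntegral.integral_const_mul _ _

/-- Cauchy integral formula on an annulus centered at `0`. -/
lemma cauchy_annulus {E : Type*} [NormedAddCommGroup E] [NormedSpace ℂ E] [CompleteSpace E]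
    {A : ℂ → E} {r R : ℝ} (h0 : 0 < r) (hrR : r ≤ R)
    (hcont : ContinuousOn A (closedBall (0:ℂ) R \ ball 0 r))
    (hd : ∀ w ∈ ball (0:ℂ) R \ closedBall 0 r, DifferentiableAt ℂ A w)
    {z : ℂ} (hz1 : r < ‖z‖) (hz2 : ‖z‖ < R) :
    ((2 * Real.pi * Complex.I : ℂ)) • A z =
      (∮ w in C(0, R), (w - z)⁻¹ • A w) - ∮ w in C(0, r), (w - z)⁻¹ • A w := by
  have hR0 : 0 < R := h0.trans_le hrR
  have hzmem : z ∈ ball (0:ℂ) R \ closedBall 0 r := by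
    simp only [mem_diff, mem_ball_zero_iff, mem_closedBall_zero_iff, not_le]
    exact ⟨hz2, hz1⟩
  have hAz : DifferentiableAt ℂ A z := hd z hzmem
  set f₀ : ℂ → E := fun w => (w - z)⁻¹ • (A w - A z) with hf₀
  set g : ℂ → E := Function.update f₀ z (deriv A z) with hg
  have hslope : Tendsto (slope A z) (nhdsWithin z {z}ᶜ) (nhds (deriv A z)) :=
    hasDerivAt_iff_tendsto_slope.1 hAz.hasDerivAt
  have hslope_eq : ∀ w, slope A z w = f₀ w := by
    intro w; rw [slope_def_module]
  -- continuity of g on closed annulus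
  have hg_cont : ContinuousOn g (closedBall (0:ℂ) R \ ball 0 r) := by
    intro w hw
    rcases eq_or_ne w z with rfl | hwz
    · rw [hg]
      apply continuousWithinAt_update_same.2
      apply Tendsto.congr (fun x => hslope_eq x)
      exact hslope.mono_left (nhdsWithin_mono _ (fun x hx => hx.2))
    · have hev : g =ᶠ[nhds w] f₀ := by
        filter_upwards [isOpen_compl_singleton.mem_nhds hwz] with x hx
        exact Function.update_of_ne hx _ _
      have hf₀cw : ContinuousWithinAt f₀ (closedBall (0:ℂ) R \ ball 0 r) w :=
        ((continuousWithinAt_id.sub continuousWithinAt_const).inv₀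
          (sub_ne_zero.2 hwz)).smul ((hcont w hw).sub continuousWithinAt_const)
      exact hf₀cw.congr_of_eventuallyEq (hev.filter_mono nhdsWithin_le_nhds)
        (Function.update_of_ne hwz _ _)
  have hg_diff : ∀ w ∈ (ball (0:ℂ) R \ closedBall 0 r) \ ({z} : Set ℂ),
      DifferentiableAt ℂ g w := by
    intro w hw
    have hwz : w ≠ z := hw.2
    have hev : g =ᶠ[nhds w] f₀ := by
      filter_upwards [isOpen_compl_singleton.mem_nhds hwz] with x hx
      exact Function.update_of_ne hx _ _
    have : DifferentiableAt ℂ f₀ w :=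
      (((differentiableAt_id.sub (differentiableAt_const z)).inv
        (sub_ne_zero.2 hwz)).smul ((hd w hw.1).sub (differentiableAt_const _)))
    exact this.congr_of_eventuallyEq hev
  have key : (∮ w in C(0, R), g w) = ∮ w in C(0, r), g w :=
    Complex.circleIntegral_eq_of_differentiable_on_annulus_off_countable h0 hrR
      (countable_singleton z) hg_cont hg_diff
  -- rewrite outer integral
  have hsub_out : ∀ w ∈ sphere (0:ℂ) R, w ≠ z := by
    intro w hw h
    rw [mem_sphere_zero_iff_norm] at hw
    rw [h] at hw
    exact absurd hw (by linarith)
  have hsub_in : ∀ w ∈ sphere (0:ℂ) r, w ≠ z := by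
    intro w hw h
    rw [mem_sphere_zero_iff_norm] at hw
    rw [h] at hw
    exact absurd hw (by linarith)
  have hAout : ContinuousOn A (sphere (0:ℂ) R) := by
    apply hcont.mono
    intro w hw
    rw [mem_sphere_zero_iff_norm] at hw
    constructor
    · simp [mem_closedBall_zero_iff, hw]
    · simp [mem_ball_zero_iff, hw]; linarith
  have hAin : ContinuousOn A (sphere (0:ℂ) r) := by
    apply hcont.mono
    intro w hw
    rw [mem_sphere_zero_iff_norm] at hw
    constructor
    · simp [mem_closedBall_zero_iff, hw]; linarith
    · simp [mem_ball_zero_iff, hw]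
  have hi_out1 : CircleIntegrable (fun w => (w - z)⁻¹ • A w) 0 R :=
    ContinuousOn.circleIntegrable hR0.le
      (((continuousOn_id.sub continuousOn_const).inv₀
        (fun w hw => sub_ne_zero.2 (hsub_out w hw))).smul hAout)
  have hi_out2 : CircleIntegrable (fun w => (w - z)⁻¹ • A z) 0 R :=
    ContinuousOn.circleIntegrable hR0.le
      (((continuousOn_id.sub continuousOn_const).inv₀
        (fun w hw => sub_ne_zero.2 (hsub_out w hw))).smul continuousOn_const)
  have hi_in1 : CircleIntegrable (fun w => (w - z)⁻¹ • A w) 0 r :=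
    ContinuousOn.circleIntegrable h0.le
      (((continuousOn_id.sub continuousOn_const).inv₀
        (fun w hw => sub_ne_zero.2 (hsub_in w hw))).smul hAin)
  have hi_in2 : CircleIntegrable (fun w => (w - z)⁻¹ • A z) 0 r :=
    ContinuousOn.circleIntegrable h0.le
      (((continuousOn_id.sub continuousOn_const).inv₀
        (fun w hw => sub_ne_zero.2 (hsub_in w hw))).smul continuousOn_const)
  have hout : (∮ w in C(0, R), g w)
      = (∮ w in C(0, R), (w - z)⁻¹ • A w) - (2 * Real.pi * Complex.I : ℂ) • A z := by
    have h1 : (∮ w in C(0, R), g w)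
        = ∮ w in C(0, R), ((w - z)⁻¹ • A w - (w - z)⁻¹ • A z) := by
      apply circleIntegral.integral_congr hR0.le
      intro w hw
      simp only [hg, hf₀, Function.update_of_ne (hsub_out w hw), smul_sub]
    rw [h1, circleIntegral.integral_sub hi_out1 hi_out2]
    congr 1
    have := circleIntegral.integral_smul_const (fun w => (w - z)⁻¹) (A z) 0 R
    rw [this, circleIntegral.integral_sub_inv_of_mem_ball hzmem.1]
  have hin : (∮ w in C(0, r), g w) = ∮ w in C(0, r), (w - z)⁻¹ • A w := by
    have h1 : (∮ w in C(0, r), g w)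
        = ∮ w in C(0, r), ((w - z)⁻¹ • A w - (w - z)⁻¹ • A z) := by
      apply circleIntegral.integral_congr h0.le
      intro w hw
      simp only [hg, hf₀, Function.update_of_ne (hsub_in w hw), smul_sub]
    rw [h1, circleIntegral.integral_sub hi_in1 hi_in2]
    have h2 : (∮ w in C(0, r), (w - z)⁻¹) = 0 := by
      apply Complex.circleIntegral_eq_zero_of_differentiable_on_off_countable h0.le
        countable_empty
      · intro w hw
        apply ContinuousWithinAt.inv₀
        · exact (continuousWithinAt_id.sub continuousWithinAt_const)
        · rw [mem_closedBall_zero_iff] at hw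
          intro h
          rw [sub_eq_zero] at h
          subst h
          linarith
      · intro w hw
        apply DifferentiableAt.inv
        · exact differentiableAt_id.sub (differentiableAt_const z)
        · rw [mem_diff, mem_ball_zero_iff] at hw
          intro h
          rw [sub_eq_zero] at h
          subst h
          have := hw.1
          linarith
    have h3 := circleIntegral.integral_smul_const (fun w => (w - z)⁻¹) (A z) 0 r
    rw [h3, h2, zero_smul, sub_zero]
  rw [hout, hin] at key
  rw [← key]
  abel


attribute [local instance] Matrix.linftyOpNormedAddCommGroup Matrix.linftyOpNormedRing
  Matrix.linftyOpNormedSpace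

/-- uniform bound, independent of `t`, for solutions of `Y' = AY`
along paths in the thin annulus `ρ⁻¹ t ≤ |z| ≤ ρ`. -/
theorem uniform_bound_solution_on_annulus (d : ℕ) (ρ c c' : ℝ)
    (hρ : 1 < ρ) (hc : 0 < c) (hc' : 0 < c') :
    ∃ K : ℝ, ∀ t : ℝ, 0 < t → t < 1 →
      ∀ A : ℂ → Matrix (Fin d) (Fin d) ℂ,
        ContinuousOn A {z : ℂ | ρ⁻¹ * t ≤ ‖z‖ ∧ ‖z‖ ≤ ρ} →
        DifferentiableOn ℂ A
          {z : ℂ | ρ⁻¹ * t < ‖z‖ ∧ ‖z‖ < ρ} →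
        (∫ θ in (0:ℝ)..(2 * Real.pi),
            ‖A ((ρ : ℂ) * Complex.exp (θ * Complex.I))‖ * ρ) ≤ c →
        (∫ θ in (0:ℝ)..(2 * Real.pi),
            ‖A (((ρ⁻¹ * t : ℝ) : ℂ) * Complex.exp (θ * Complex.I))‖ * (ρ⁻¹ * t))
          ≤ c * t →
        ∀ γ γ' : ℝ → ℂ,
          (∀ s ∈ Set.Icc (0:ℝ) 1, HasDerivAt γ (γ' s) s) →
          ContinuousOn γ' (Set.Icc (0:ℝ) 1) →
          (∀ s ∈ Set.Icc (0:ℝ) 1, t ≤ ‖γ s‖ ∧ ‖γ s‖ ≤ 1) →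
          γ 0 = 1 →
          (∫ s in (0:ℝ)..1, ‖γ' s‖) ≤ 1 + c' →
          ∀ Y : ℝ → Matrix (Fin d) (Fin d) ℂ,
            Y 0 = 1 →
            (∀ s ∈ Set.Icc (0:ℝ) 1, HasDerivAt Y (γ' s • (A (γ s) * Y s)) s) →
            ∀ s ∈ Set.Icc (0:ℝ) 1, ‖Y s‖ ≤ K := by
  have hρ0 : (0:ℝ) < ρ := by linarith
  have hρi0 : 0 < ρ⁻¹ := inv_pos.2 hρ0
  have hρi : ρ⁻¹ < 1 := by
    rw [inv_lt_one_iff₀]; right; exact hρ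
  have hsub1 : (0:ℝ) < ρ - 1 := by linarith
  have hsub2 : (0:ℝ) < 1 - ρ⁻¹ := by linarith
  set M : ℝ := (c / (ρ - 1) + c / (1 - ρ⁻¹)) / (2 * Real.pi) with hM
  have hM0 : 0 ≤ M := by positivity
  have hone : ‖(1 : Matrix (Fin d) (Fin d) ℂ)‖ ≤ 1 := by
    rcases Nat.eq_zero_or_pos d with hd | hd
    · subst hd
      have h1 : (1 : Matrix (Fin 0) (Fin 0) ℂ) = 0 := by
        ext i j; exact i.elim0
      rw [h1, norm_zero]; exact zero_le_one
    · haveI : Nonempty (Fin d) := ⟨⟨0, hd⟩⟩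
      exact le_of_eq norm_one
  refine ⟨Real.exp ((M + 1) * (2 + c')), ?_⟩
  intro t ht0 ht1 A hAc hAd hout hin γ γ' hγd hγ'c hγmem hγ0 hlen Y hY0 hYd
  set r : ℝ := ρ⁻¹ * t with hrdef
  have hr0 : 0 < r := by positivity
  have hrt : r < t := by
    calc r = ρ⁻¹ * t := rfl
    _ < 1 * t := by apply mul_lt_mul_of_pos_right hρi ht0
    _ = t := one_mul t
  have hrρ : r ≤ ρ := by linarith
  have hsetc : closedBall (0:ℂ) ρ \ ball 0 r
      = {z : ℂ | r ≤ ‖z‖ ∧ ‖z‖ ≤ ρ} := by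
    ext w
    simp only [mem_diff, mem_closedBall_zero_iff, mem_ball_zero_iff,
      not_lt, mem_setOf_eq]
    tauto
  have hseto : ball (0:ℂ) ρ \ closedBall 0 r
      = {z : ℂ | r < ‖z‖ ∧ ‖z‖ < ρ} := by
    ext w
    simp only [mem_diff, mem_ball_zero_iff, mem_closedBall_zero_iff,
      not_le, mem_setOf_eq]
    tauto
  rw [← hsetc] at hAc
  rw [← hseto] at hAd
  have hsphout : sphere (0:ℂ) ρ ⊆ closedBall 0 ρ \ ball 0 r := by
    intro w hw
    rw [mem_sphere_zero_iff_norm] at hw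
    simp only [mem_diff, mem_closedBall_zero_iff, mem_ball_zero_iff, not_lt, hw]
    exact ⟨le_rfl, by linarith⟩
  have hsphin : sphere (0:ℂ) r ⊆ closedBall 0 ρ \ ball 0 r := by
    intro w hw
    rw [mem_sphere_zero_iff_norm] at hw
    simp only [mem_diff, mem_closedBall_zero_iff, mem_ball_zero_iff, not_lt, hw]
    exact ⟨by linarith, le_rfl⟩
  -- pointwise bound on the middle annulus
  have hAbound : ∀ z : ℂ, t ≤ ‖z‖ → ‖z‖ ≤ 1 → ‖A z‖ ≤ M := by
    intro z hz1 hz2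
    have hz1' : r < ‖z‖ := lt_of_lt_of_le hrt hz1
    have hz2' : ‖z‖ < ρ := lt_of_le_of_lt hz2 hρ
    have hdiff : ∀ w ∈ ball (0:ℂ) ρ \ closedBall 0 r, DifferentiableAt ℂ A w := by
      intro w hw
      have hopen : IsOpen (ball (0:ℂ) ρ \ closedBall 0 r) :=
        isOpen_ball.sdiff Metric.isClosed_closedBall
      exact hAd.differentiableAt (hopen.mem_nhds hw)
    have key := cauchy_annulus hr0 hrρ hAc hdiff hz1' hz2'
    have houtb : ‖∮ w in C(0, ρ), (w - z)⁻¹ • A w‖ ≤ (ρ - 1)⁻¹ * c := by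
      have hdist_out : ∀ w ∈ sphere (0:ℂ) ρ, ρ - 1 ≤ ‖w - z‖ := by
        intro w hw
        rw [mem_sphere_zero_iff_norm] at hw
        have h := norm_sub_norm_le w z
        rw [hw] at h
        linarith
      have h1 := norm_ci_le A hρ0 hsub1 z (hAc.mono hsphout) hdist_out
      refine h1.trans ?_
      apply mul_le_mul_of_nonneg_left _ (by positivity)
      simp only [circleMap, zero_add]
      exact hout
    have hinb : ‖∮ w in C(0, r), (w - z)⁻¹ • A w‖ ≤ c / (1 - ρ⁻¹) := by
      have hdist_in : ∀ w ∈ sphere (0:ℂ) r, t - r ≤ ‖w - z‖ := by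
        intro w hw
        rw [mem_sphere_zero_iff_norm] at hw
        have h := norm_sub_norm_le z w
        rw [norm_sub_rev, hw] at h
        linarith
      have htr : (0:ℝ) < t - r := by linarith
      have h1 := norm_ci_le A hr0 htr z (hAc.mono hsphin) hdist_in
      refine h1.trans ?_
      have h2 : (∫ θ in (0:ℝ)..(2 * Real.pi), ‖A (circleMap 0 r θ)‖ * r) ≤ c * t := by
        simp only [circleMap, zero_add]
        exact hin
      calc (t - r)⁻¹ * ∫ θ in (0:ℝ)..(2 * Real.pi), ‖A (circleMap 0 r θ)‖ * r
          ≤ (t - r)⁻¹ * (c * t) := by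
            apply mul_le_mul_of_nonneg_left h2 (by positivity)
        _ = c / (1 - ρ⁻¹) := by
            have e : t - r = t * (1 - ρ⁻¹) := by rw [hrdef]; ring
            rw [e, mul_inv, div_eq_mul_inv]
            calc t⁻¹ * (1 - ρ⁻¹)⁻¹ * (c * t) = (t⁻¹ * t) * (c * (1 - ρ⁻¹)⁻¹) := by ring
              _ = c * (1 - ρ⁻¹)⁻¹ := by rw [inv_mul_cancel₀ ht0.ne', one_mul]
    have hnorm : ‖((2 * Real.pi * Complex.I : ℂ)) • A z‖ = 2 * Real.pi * ‖A z‖ := by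
      rw [norm_smul]
      congr 1
      simp [Complex.norm_exp, abs_of_pos Real.pi_pos]
    have hineq : 2 * Real.pi * ‖A z‖ ≤ c / (ρ - 1) + c / (1 - ρ⁻¹) := by
      rw [← hnorm, key]
      refine (norm_sub_le _ _).trans ?_
      have e1 : (ρ - 1)⁻¹ * c = c / (ρ - 1) := by rw [div_eq_inv_mul]
      linarith
    rw [hM, le_div_iff₀ (by positivity : (0:ℝ) < 2 * Real.pi)]
    linarith
  -- Gronwall-type argument
  set φ : ℝ → ℂ := fun u => γ' (max 0 (min u 1)) with hφdef
  have hmaps : ∀ u : ℝ, max 0 (min u 1) ∈ Icc (0:ℝ) 1 :=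
    fun u => ⟨le_max_left _ _, max_le zero_le_one (min_le_right u 1)⟩
  have hφc : Continuous φ :=
    hγ'c.comp_continuous (continuous_const.max (continuous_id.min continuous_const)) hmaps
  have hφeq : ∀ u ∈ Icc (0:ℝ) 1, φ u = γ' u := by
    intro u hu
    simp only [hφdef]
    rw [min_eq_left hu.2, max_eq_right hu.1]
  set v : ℝ → ℝ := fun x => ∫ u in (0:ℝ)..x, (‖φ u‖ + 1) with hvdef
  have hg'c : Continuous fun u : ℝ => ‖φ u‖ + 1 := hφc.norm.add continuous_const
  have hv : ∀ x : ℝ, HasDerivAt v (‖φ x‖ + 1) x := by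
    intro x
    exact intervalIntegral.integral_hasDerivAt_right (hg'c.intervalIntegrable _ _)
      (hg'c.stronglyMeasurable.stronglyMeasurableAtFilter) hg'c.continuousAt
  set B : ℝ → ℝ := fun x => Real.exp ((M + 1) * v x) with hBdef
  have hB : ∀ x, HasDerivAt B ((M + 1) * (‖φ x‖ + 1) * B x) x := by
    intro x
    have h := ((hv x).const_mul (M + 1)).exp
    rwa [mul_comm] at h
  have hYcont : ContinuousOn Y (Icc 0 1) :=
    fun x hx => (hYd x hx).continuousAt.continuousWithinAt
  have hYderiv : ∀ x ∈ Ico (0:ℝ) 1,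
      HasDerivWithinAt Y (γ' x • (A (γ x) * Y x)) (Ici x) x :=
    fun x hx => (hYd x (Ico_subset_Icc_self hx)).hasDerivWithinAt
  have ha : ‖Y 0‖ ≤ B 0 := by
    rw [hY0]
    have hB0 : B 0 = 1 := by
      simp [hBdef, hvdef, intervalIntegral.integral_same]
    rw [hB0]
    exact hone
  have bound : ∀ x ∈ Ico (0:ℝ) 1, ‖Y x‖ = B x →
      ‖γ' x • (A (γ x) * Y x)‖ < (M + 1) * (‖φ x‖ + 1) * B x := by
    intro x hx hYB
    have hxI : x ∈ Icc (0:ℝ) 1 := Ico_subset_Icc_self hx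
    have hA1 : ‖A (γ x)‖ ≤ M := hAbound _ (hγmem x hxI).1 (hγmem x hxI).2
    have hBpos : 0 < B x := Real.exp_pos _
    rw [norm_smul, hφeq x hxI]
    have h2 : ‖A (γ x) * Y x‖ ≤ ‖A (γ x)‖ * ‖Y x‖ := norm_mul_le _ _
    rw [hYB] at h2
    have hgn : 0 ≤ ‖γ' x‖ := norm_nonneg _
    have hAn : 0 ≤ ‖A (γ x)‖ := norm_nonneg _
    nlinarith [mul_le_mul_of_nonneg_left h2 hgn,
      mul_le_mul_of_nonneg_right hA1 hBpos.le, mul_nonneg hM0 hgn,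
      mul_nonneg (mul_nonneg hgn hAn) hBpos.le]
  have main := image_norm_le_of_norm_deriv_right_lt_deriv_boundary
    hYcont hYderiv ha hB bound
  intro s hs
  refine (main hs).trans ?_
  rw [hBdef]
  apply Real.exp_le_exp.2
  apply mul_le_mul_of_nonneg_left _ (by linarith : (0:ℝ) ≤ M + 1)
  have h1 : v s ≤ v 1 := by
    apply intervalIntegral.integral_mono_interval le_rfl hs.1 hs.2
    · filter_upwards with u
      positivity
    · exact hg'c.intervalIntegrable 0 1
  have h2 : v 1 = (∫ u in (0:ℝ)..1, ‖γ' u‖) + 1 := by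
    rw [hvdef]
    simp only
    rw [intervalIntegral.integral_add (hφc.norm.intervalIntegrable 0 1)
      (intervalIntegrable_const)]
    congr 1
    · apply intervalIntegral.integral_congr
      intro u hu
      rw [uIcc_of_le zero_le_one] at hu
      show ‖φ u‖ = ‖γ' u‖
      rw [hφeq u hu]
    · simp
  linarith
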